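/- (Wart Removal Lemma) Let G be a graph with root r, C a configuration, and W a connected component of G − X for some clique X ⊆ V(G), with r ∉ W and C(w) ≤ 1 for every w ∈ W. Then C is t-fold r-solvable on G if and only if C restricted to G − W is t-fold r-solvable on G − W. -/

import Mathlib

open SimpleGraph

/-- A single pebbling step: remove two pebbles from `u`, add one to a neighbor `v`. -/
def PebStep {V : Type} (G : SimpleGraph V) (C C' : V → ℕ) : Prop :=
  ∃ u v : V, G.Adj u v ∧ 2 ≤ C u ∧
    C' u + 2 = C u ∧ C' v = C v + 1 ∧ ∀ w, w ≠ u → w ≠ v → C' w = C w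

/-- `C` is `t`-fold `r`-solvable. -/
def TSolvable {V : Type} (G : SimpleGraph V) (C : V → ℕ) (r : V) (t : ℕ) : Prop :=
  ∃ C', Relation.ReflTransGen (PebStep G) C C' ∧ t ≤ C' r

/-- The `t`-pebbling number of `G` rooted at `r`. -/
noncomputable def piT {V : Type} (G : SimpleGraph V) (r : V) (t : ℕ) : ℕ :=
  sInf {s | ∀ C : V → ℕ, s ≤ ∑ᶠ v, C v → TSolvable G C r t}

/-- The pebbling number of `G` rooted at `r`. -/
noncomputable def pin {V : Type} (G : SimpleGraph V) (r : V) : ℕ := piT G r 1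

/-- The `t`-pebbling number of `G`. -/
noncomputable def piGt {V : Type} (G : SimpleGraph V) (t : ℕ) : ℕ := ⨆ r, piT G r t

/-- The pebbling number of `G`. -/
noncomputable def piG {V : Type} (G : SimpleGraph V) : ℕ := ⨆ r, pin G r

/-- Eccentricity of `r`. -/
noncomputable def eccG {V : Type} (G : SimpleGraph V) (r : V) : ℕ := ⨆ v, G.dist r v

/-- Diameter of `G`. -/
noncomputable def diamG {V : Type} (G : SimpleGraph V) : ℕ := ⨆ u, eccG G u

/-- Wart Removal Lemma: if `W` is a connected component of `G - X` for a
clique `X`, the root `r` is not in `W`, and every vertex of `W` carries at most one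
pebble, then `C` is `t`-fold `r`-solvable on `G` iff its restriction to `G - W` is
`t`-fold `r`-solvable on `G - W`. -/
theorem wart_removal {V : Type} (G : SimpleGraph V) (r : V) (C : V → ℕ)
    (X W : Set V) (hX : G.IsClique X)
    (hW : ∃ c : (G.induce {v | v ∉ X}).ConnectedComponent, W = Subtype.val '' c.supp)
    (hr : r ∉ W) (hC : ∀ w ∈ W, C w ≤ 1) (t : ℕ) :
    TSolvable G C r t ↔
      TSolvable (G.induce {v | v ∉ W}) (fun v => C v.1) ⟨r, hr⟩ t := by
  classical
  obtain ⟨c, hc⟩ := hW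
  have hWX : ∀ w ∈ W, w ∉ X := by
    intro w hw
    rw [hc] at hw
    obtain ⟨w', _, rfl⟩ := hw
    exact w'.2
  have hadjX : ∀ a w, G.Adj a w → w ∈ W → a ∉ W → a ∈ X := by
    intro a w hadj hw ha
    by_contra haX
    apply ha
    rw [hc] at hw ⊢
    obtain ⟨w', hw', rfl⟩ := hw
    refine ⟨⟨a, haX⟩, ?_, rfl⟩
    have hadj' : (G.induce {v | v ∉ X}).Adj ⟨a, haX⟩ w' := hadj
    rw [SimpleGraph.ConnectedComponent.mem_supp_iff] at hw' ⊢
    rw [← hw']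
    exact SimpleGraph.ConnectedComponent.sound hadj'.reachable
  have simstep : ∀ (E : {v : V | v ∉ W} → ℕ) (a b : {v : V | v ∉ W}), G.Adj a.1 b.1 → 2 ≤ E a →
      PebStep (G.induce {v | v ∉ W}) E
        (fun z => if z = b then E b + 1 else if z = a then E a - 2 else E z) := by
    intro E a b hab h2
    have hne : a ≠ b := fun h => hab.ne (congrArg Subtype.val h)
    refine ⟨a, b, hab, h2, ?_, ?_, ?_⟩
    · show (if a = b then E b + 1 else if a = a then E a - 2 else E a) + 2 = E a
      rw [if_neg hne, if_pos rfl]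
      omega
    · show (if b = b then E b + 1 else if b = a then E a - 2 else E b) = E b + 1
      rw [if_pos rfl]
    · intro w hwa hwb
      show (if w = b then E b + 1 else if w = a then E a - 2 else E w) = E w
      rw [if_neg hwb, if_neg hwa]
  constructor
  · rintro ⟨D, hD, hDr⟩
    have main : ∃ D' : {v : V | v ∉ W} → ℕ,
        Relation.ReflTransGen (PebStep (G.induce {v | v ∉ W})) (fun v => C v.1) D' ∧
        ∃ S P M : Multiset V,
          (∀ x ∈ S, x ∉ W) ∧ (∀ x ∈ P, x ∈ X) ∧
          (∀ x, 2 * P.count x ≤ S.count x) ∧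
          (∀ v : {v : V | v ∉ W}, D' v = D v.1 + S.count v.1) ∧
          (∀ w ∈ W, D w ≤ 1 + M.count w) ∧
          M.card ≤ P.card := by
      clear hDr
      induction hD with
      | refl =>
        refine ⟨fun v => C v.1, Relation.ReflTransGen.refl, 0, 0, 0, ?_, ?_, ?_, ?_, ?_, le_rfl⟩
        · simp
        · simp
        · simp
        · simp
        · intro w hw; simpa using hC w hw
      | @tail b1 b2 hb hstep ih =>
        obtain ⟨u, v, huv, h2, hdu, hdv, hoth⟩ := hstep
        obtain ⟨D', hD', S, P, M, hS, hP, hSP, hDe, hMW, hcard⟩ := ih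
        by_cases hu : u ∈ W
        · by_cases hv : v ∈ W
          · -- internal move inside W; simulate nothing
            have hmu : 1 ≤ M.count u := by have := hMW u hu; omega
            have humem : u ∈ M := Multiset.count_pos.mp hmu
            refine ⟨D', hD', S, P, v ::ₘ M.erase u, hS, hP, hSP, ?_, ?_, ?_⟩
            · intro z
              rw [hDe z]
              have hz : z.1 ∉ W := z.2
              have h1 : z.1 ≠ u := fun h => hz (h ▸ hu)
              have h2' : z.1 ≠ v := fun h => hz (h ▸ hv)
              rw [hoth z.1 h1 h2']
            · intro w hw
              have hb := hMW w hw
              by_cases hwu : w = u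
              · have hwv : w ≠ v := hwu ▸ huv.ne
                rw [Multiset.count_cons_of_ne hwv, hwu, Multiset.count_erase_self]
                rw [hwu] at hb
                omega
              · by_cases hwv : w = v
                · rw [hwv, Multiset.count_cons_self,
                    Multiset.count_erase_of_ne (hwv ▸ hwu) M]
                  rw [hwv] at hb
                  omega
                · rw [hoth w hwu hwv, Multiset.count_cons_of_ne hwv,
                    Multiset.count_erase_of_ne hwu]
                  omega
            · have hMpos : 0 < M.card := Multiset.card_pos_iff_exists_mem.mpr ⟨u, humem⟩
              rw [Multiset.card_cons, Multiset.card_erase_of_mem humem,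
                Nat.pred_eq_sub_one]
              omega
          · -- extraction: u ∈ W, v ∉ W
            have hvX : v ∈ X := hadjX v u huv.symm hu hv
            have hmu : 1 ≤ M.count u := by have := hMW u hu; omega
            have humem : u ∈ M := Multiset.count_pos.mp hmu
            by_cases hPv : 1 ≤ P.count v
            · -- case A: consume a slack pebble at v itself; no simulated move
              have hSv : 2 ≤ S.count v := le_trans (by omega) (hSP v)
              refine ⟨D', hD', S.erase v, P.erase v, M.erase u,
                fun x hx => hS x (Multiset.mem_of_mem_erase hx),
                fun x hx => hP x (Multiset.mem_of_mem_erase hx), ?_, ?_, ?_, ?_⟩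
              · intro x
                by_cases hxv : x = v
                · subst hxv
                  have := hSP x
                  rw [Multiset.count_erase_self, Multiset.count_erase_self]
                  omega
                · rw [Multiset.count_erase_of_ne hxv, Multiset.count_erase_of_ne hxv]
                  exact hSP x
              · intro z
                rw [hDe z]
                have hz : z.1 ∉ W := z.2
                have h1 : z.1 ≠ u := fun h => hz (h ▸ hu)
                by_cases hzv : z.1 = v
                · rw [hzv, Multiset.count_erase_self]
                  have := hdv
                  omega
                · rw [hoth z.1 h1 hzv, Multiset.count_erase_of_ne hzv]
              · intro w hw
                have hb := hMW w hw
                by_cases hwu : w = u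
                · rw [hwu, Multiset.count_erase_self]
                  rw [hwu] at hb
                  have := hdu
                  omega
                · have hwv : w ≠ v := fun h => hv (h ▸ hw)
                  rw [hoth w hwu hwv, Multiset.count_erase_of_ne hwu]
                  omega
              · have hvP : v ∈ P := Multiset.count_pos.mp hPv
                have hMpos : 0 < M.card := Multiset.card_pos_iff_exists_mem.mpr ⟨u, humem⟩
                have hPpos : 0 < P.card := Multiset.card_pos_iff_exists_mem.mpr ⟨v, hvP⟩
                rw [Multiset.card_erase_of_mem humem, Multiset.card_erase_of_mem hvP,
                  Nat.pred_eq_sub_one, Nat.pred_eq_sub_one]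
                omega
            · -- case B: simulated clique move x → v for some x ∈ P
              have hMpos : 0 < M.card := Multiset.card_pos_iff_exists_mem.mpr ⟨u, humem⟩
              have hPpos : P ≠ 0 := by
                intro h
                rw [h, Multiset.card_zero] at hcard
                omega
              obtain ⟨x, hxP⟩ := Multiset.exists_mem_of_ne_zero hPpos
              have hxX : x ∈ X := hP x hxP
              have hxW : x ∉ W := fun h => hWX x h hxX
              have hxv : x ≠ v := by
                intro h
                subst h
                exact hPv (Multiset.count_pos.mpr hxP)
              have hadjxv : G.Adj x v := hX hxX hvX hxv
              have hPx : 1 ≤ P.count x := Multiset.count_pos.mpr hxP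
              have hSx : 2 ≤ S.count x := le_trans (by omega) (hSP x)
              have hxW' : x ∈ {v : V | v ∉ W} := hxW
              have hvW' : v ∈ {v : V | v ∉ W} := hv
              have h2Dx : 2 ≤ D' ⟨x, hxW'⟩ := by rw [hDe ⟨x, hxW'⟩]; simp only; omega
              have hstep' := simstep D' ⟨x, hxW'⟩ ⟨v, hvW'⟩ hadjxv h2Dx
              refine ⟨_, hD'.tail hstep', (S.erase x).erase x, P.erase x, M.erase u,
                fun y hy => hS y (Multiset.mem_of_mem_erase (Multiset.mem_of_mem_erase hy)),
                fun y hy => hP y (Multiset.mem_of_mem_erase hy), ?_, ?_, ?_, ?_⟩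
              · intro y
                by_cases hyx : y = x
                · subst hyx
                  have := hSP y
                  simp only [Multiset.count_erase_self]
                  omega
                · rw [Multiset.count_erase_of_ne hyx, Multiset.count_erase_of_ne hyx,
                    Multiset.count_erase_of_ne hyx]
                  exact hSP y
              · intro z
                have hz : z.1 ∉ W := z.2
                have h1 : z.1 ≠ u := fun h => hz (h ▸ hu)
                by_cases hzv : z = (⟨v, hvW'⟩ : {v : V | v ∉ W})
                · subst hzv
                  rw [if_pos rfl, hDe ⟨v, hvW'⟩]
                  simp only
                  rw [Multiset.count_erase_of_ne hxv.symm, Multiset.count_erase_of_ne hxv.symm]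
                  omega
                · rw [if_neg hzv]
                  by_cases hzx : z = (⟨x, hxW'⟩ : {v : V | v ∉ W})
                  · subst hzx
                    rw [if_pos rfl, hDe ⟨x, hxW'⟩]
                    simp only
                    have hxu : x ≠ u := fun h => (h ▸ hxW) hu
                    have hxv' : x ≠ v := hxv
                    rw [hoth x hxu hxv', Multiset.count_erase_self, Multiset.count_erase_self]
                    omega
                  · rw [if_neg hzx, hDe z]
                    have hzv' : z.1 ≠ v := fun h => hzv (Subtype.ext h)
                    have hzx' : z.1 ≠ x := fun h => hzx (Subtype.ext h)
                    rw [hoth z.1 h1 hzv', Multiset.count_erase_of_ne hzx',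
                      Multiset.count_erase_of_ne hzx']
              · intro w hw
                have hb := hMW w hw
                by_cases hwu : w = u
                · rw [hwu, Multiset.count_erase_self]
                  rw [hwu] at hb
                  have := hdu
                  omega
                · have hwv : w ≠ v := fun h => hv (h ▸ hw)
                  rw [hoth w hwu hwv, Multiset.count_erase_of_ne hwu]
                  omega
              · have hPpos2 : 0 < P.card := Multiset.card_pos_iff_exists_mem.mpr ⟨x, hxP⟩
                rw [Multiset.card_erase_of_mem humem, Multiset.card_erase_of_mem hxP,
                  Nat.pred_eq_sub_one, Nat.pred_eq_sub_one]
                omega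
        · by_cases hv : v ∈ W
          · -- insertion: u ∉ W, v ∈ W; skip the move, gain slack at u
            have huX : u ∈ X := hadjX u v huv hv hu
            refine ⟨D', hD', u ::ₘ u ::ₘ S, u ::ₘ P, v ::ₘ M, ?_, ?_, ?_, ?_, ?_, ?_⟩
            · intro y hy
              rcases Multiset.mem_cons.mp hy with h | hy'
              · exact h ▸ hu
              · rcases Multiset.mem_cons.mp hy' with h | h
                · exact h ▸ hu
                · exact hS y h
            · intro y hy
              rcases Multiset.mem_cons.mp hy with h | h
              · exact h ▸ huX
              · exact hP y h
            · intro y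
              by_cases hyu : y = u
              · subst hyu
                have := hSP y
                rw [Multiset.count_cons_self, Multiset.count_cons_self,
                  Multiset.count_cons_self]
                omega
              · rw [Multiset.count_cons_of_ne hyu, Multiset.count_cons_of_ne hyu,
                  Multiset.count_cons_of_ne hyu]
                exact hSP y
            · intro z
              rw [hDe z]
              have hz : z.1 ∉ W := z.2
              have hzv : z.1 ≠ v := fun h => hz (h ▸ hv)
              by_cases hzu : z.1 = u
              · rw [hzu, Multiset.count_cons_self, Multiset.count_cons_self]
                omega
              · rw [hoth z.1 hzu hzv, Multiset.count_cons_of_ne hzu,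
                  Multiset.count_cons_of_ne hzu]
            · intro w hw
              by_cases hwv : w = v
              · subst hwv
                have := hMW w hw
                rw [Multiset.count_cons_self]
                omega
              · have hwu : w ≠ u := fun h => hu (h ▸ hw)
                rw [hoth w hwu hwv, Multiset.count_cons_of_ne hwv]
                exact hMW w hw
            · rw [Multiset.card_cons, Multiset.card_cons]
              omega
          · -- ordinary move outside W: simulate it
            have huW' : u ∈ {v : V | v ∉ W} := hu
            have hvW' : v ∈ {v : V | v ∉ W} := hv
            have h2Du : 2 ≤ D' ⟨u, huW'⟩ := by rw [hDe ⟨u, huW'⟩]; simp only; omega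
            have hstep' := simstep D' ⟨u, huW'⟩ ⟨v, hvW'⟩ huv h2Du
            refine ⟨_, hD'.tail hstep', S, P, M, hS, hP, hSP, ?_, ?_, hcard⟩
            · intro z
              by_cases hzv : z = (⟨v, hvW'⟩ : {v : V | v ∉ W})
              · subst hzv
                rw [if_pos rfl, hDe ⟨v, hvW'⟩]
                simp only
                omega
              · rw [if_neg hzv]
                by_cases hzu : z = (⟨u, huW'⟩ : {v : V | v ∉ W})
                · subst hzu
                  rw [if_pos rfl, hDe ⟨u, huW'⟩]
                  simp only
                  omega
                · rw [if_neg hzu, hDe z]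
                  have hzv' : z.1 ≠ v := fun h => hzv (Subtype.ext h)
                  have hzu' : z.1 ≠ u := fun h => hzu (Subtype.ext h)
                  rw [hoth z.1 hzu' hzv']
            · intro w hw
              have hwu : w ≠ u := fun h => hu (h ▸ hw)
              have hwv : w ≠ v := fun h => hv (h ▸ hw)
              rw [hoth w hwu hwv]
              exact hMW w hw
    obtain ⟨D', hD', S, P, M, hS, hP, hSP, hDe, hMW, hcard⟩ := main
    refine ⟨D', hD', ?_⟩
    rw [hDe ⟨r, hr⟩]
    simp only
    omega
  · rintro ⟨D', hD', hDr⟩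
    set ext : ({v : V | v ∉ W} → ℕ) → V → ℕ :=
      fun E v => if h : v ∉ W then E ⟨v, h⟩ else C v with hext
    have hlift : ∀ E E', PebStep (G.induce {v | v ∉ W}) E E' → PebStep G (ext E) (ext E') := by
      rintro E E' ⟨a, b, hab, h2, hEa, hEb, hoth⟩
      have hadj : G.Adj a.1 b.1 := hab
      have ha : (a : V) ∉ W := a.2
      have hb : (b : V) ∉ W := b.2
      refine ⟨a.1, b.1, hadj, ?_, ?_, ?_, ?_⟩
      · show 2 ≤ ext E a.1
        simp only [hext]
        rw [dif_pos ha]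
        exact h2
      · show ext E' a.1 + 2 = ext E a.1
        simp only [hext]
        rw [dif_pos ha, dif_pos ha]
        exact hEa
      · show ext E' b.1 = ext E b.1 + 1
        simp only [hext]
        rw [dif_pos hb, dif_pos hb]
        exact hEb
      · intro w hwa hwb
        simp only [hext]
        by_cases hw : w ∉ W
        · rw [dif_pos hw, dif_pos hw]
          exact hoth ⟨w, hw⟩ (fun h => hwa (congrArg Subtype.val h))
            (fun h => hwb (congrArg Subtype.val h))
        · rw [dif_neg hw, dif_neg hw]
    have hbase : ext (fun v => C v.1) = C := by
      funext v
      simp only [hext]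
      by_cases hvw : v ∉ W
      · rw [dif_pos hvw]
      · rw [dif_neg hvw]
    refine ⟨ext D', ?_, ?_⟩
    · have : Relation.ReflTransGen (PebStep G) (ext (fun v => C v.1)) (ext D') :=
        Relation.ReflTransGen.lift ext (fun a b h => hlift a b h) _ _ hD'
      rwa [hbase] at this
    · show t ≤ ext D' r
      simp only [hext]
      rw [dif_pos hr]
      exact hDr
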